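/- Let τ, κ be involutions in Σ_N such that no proper nonempty subset of {1,…,N} is invariant under both τ and κ, and suppose τ and κ are products of different numbers of disjoint transpositions. Then there exists an involution σ ∈ Σ_N commuting with both τ and κ such that S(σ,τ)·S(σ,κ) = −1, where S(σ,τ) = (−1)^{#{ {a,b} : a<b, τ(a)=b, σ(a)>σ(b) }}. -/
import Mathlib


open Equiv Finset

def Ssign {N : ℕ} (σ τ : Equiv.Perm (Fin N)) : ℤ :=
  (-1) ^ (Finset.univ.filter (fun p : Fin N × Fin N =>
      p.1 < p.2 ∧ τ p.1 = p.2 ∧ σ p.2 < σ p.1)).card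

/-- H is invariant under a permutation π : π maps H onto itself. -/
def InvSet {N : ℕ} (π : Equiv.Perm (Fin N)) (H : Finset (Fin N)) : Prop :=
  ∀ a ∈ H, π a ∈ H

/-- No proper nonempty subset of {1,…,N} is invariant under both τ and κ. -/
def NoCommonInvariant {N : ℕ} (τ κ : Equiv.Perm (Fin N)) : Prop :=
  ∀ H : Finset (Fin N), H.Nonempty → H ≠ Finset.univ → ¬ (InvSet τ H ∧ InvSet κ H)

lemma invol_apply {N : ℕ} {τ : Equiv.Perm (Fin N)} (hτ : τ * τ = 1) (x : Fin N) :
    τ (τ x) = x := by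
  have := congrArg (fun f : Equiv.Perm (Fin N) => f x) hτ
  simpa [Equiv.Perm.mul_apply] using this

lemma Ssign_eq_fix {N : ℕ} (σ τ : Equiv.Perm (Fin N)) (hσ : σ * σ = 1) (hτ : τ * τ = 1)
    (hc : Commute σ τ) :
    Ssign σ τ = (-1) ^ (Finset.univ.filter (fun p : Fin N × Fin N =>
      p.1 < p.2 ∧ τ p.1 = p.2 ∧ σ p.1 = p.2)).card := by
  classical
  have hσa := invol_apply hσ
  have hτa := invol_apply hτ
  have hcomm : ∀ x, σ (τ x) = τ (σ x) := by
    intro x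
    have := congrArg (fun f : Equiv.Perm (Fin N) => f x) hc.eq
    simpa [Equiv.Perm.mul_apply] using this
  set T := Finset.univ.filter (fun p : Fin N × Fin N =>
      p.1 < p.2 ∧ τ p.1 = p.2 ∧ σ p.2 < σ p.1) with hT
  set F := Finset.univ.filter (fun p : Fin N × Fin N =>
      p.1 < p.2 ∧ τ p.1 = p.2 ∧ σ p.1 = p.2) with hF
  have hFT : F ⊆ T := by
    intro p hp
    simp only [hF, mem_filter, mem_univ, true_and] at hp
    obtain ⟨h1, h2, h3⟩ := hp
    simp only [hT, mem_filter, mem_univ, true_and]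
    refine ⟨h1, h2, ?_⟩
    rw [← h3, hσa, h3]
    exact h1
  have hsplit : (T \ F).card + F.card = T.card := Finset.card_sdiff_add_card_eq_card hFT
  have heven : (-1 : ℤ) ^ (T \ F).card = 1 := by
    have hmem : ∀ p : Fin N × Fin N, p ∈ T \ F → (σ p.2, σ p.1) ∈ T \ F := by
      rintro ⟨a, b⟩ hp
      rw [Finset.mem_sdiff] at hp ⊢
      obtain ⟨hpT, hpF⟩ := hp
      simp only [hT, mem_filter, mem_univ, true_and] at hpT
      obtain ⟨h1, h2, h3⟩ := hpT
      have hτb : τ b = a := by rw [← h2, hτa]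
      constructor
      · simp only [hT, mem_filter, mem_univ, true_and]
        refine ⟨h3, ?_, ?_⟩
        · rw [← hcomm, hτb]
        · rw [hσa, hσa]
          exact h1
      · simp only [hF, mem_filter, mem_univ, true_and]
        rintro ⟨-, -, hbad⟩
        rw [hσa] at hbad
        apply hpF
        simp only [hF, mem_filter, mem_univ, true_and]
        exact ⟨h1, h2, hbad.symm⟩
    have := Finset.prod_involution (s := T \ F) (f := fun _ => (-1 : ℤ))
      (g := fun p _ => (σ p.2, σ p.1)) (fun a ha => by norm_num)
      (fun p hp hne heq => by
        apply (Finset.mem_sdiff.mp hp).2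
        simp only [hF, mem_filter, mem_univ, true_and]
        have hpT := (Finset.mem_sdiff.mp hp).1
        simp only [hT, mem_filter, mem_univ, true_and] at hpT
        have h2 : σ p.1 = p.2 := by
          have := congrArg Prod.snd heq
          exact this
        exact ⟨hpT.1, hpT.2.1, h2⟩)
      hmem
      (fun p hp => by
        ext <;> simp [hσa])
    rw [Finset.prod_const] at this
    exact this
  rw [Ssign, ← hsplit, pow_add, heven, one_mul]

lemma fix_eq_empty {N : ℕ} (σ π : Equiv.Perm (Fin N)) (e : ZMod N → Fin N)
    (esurj : Function.Surjective e) (einj : Function.Injective e)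
    (h : ℕ) (hσ : ∀ j, σ (e j) = e (j + (h : ZMod N))) (c : ZMod N)
    (hπ : ∀ j, π (e j) = e (c - j))
    (hno : ∀ j : ZMod N, j + (h : ZMod N) ≠ c - j) :
    (Finset.univ.filter (fun p : Fin N × Fin N =>
      p.1 < p.2 ∧ π p.1 = p.2 ∧ σ p.1 = p.2)) = ∅ := by
  rw [Finset.filter_eq_empty_iff]
  rintro ⟨a, b⟩ -
  rintro ⟨h1, h2, h3⟩
  obtain ⟨j, rfl⟩ := esurj a
  rw [hπ] at h2
  rw [hσ] at h3
  exact hno j (einj (h3.trans h2.symm))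

lemma fix_eq_singleton {N : ℕ} (σ π : Equiv.Perm (Fin N)) (e : ZMod N → Fin N)
    (esurj : Function.Surjective e) (einj : Function.Injective e)
    (h : ℕ) (hσ : ∀ j, σ (e j) = e (j + (h : ZMod N))) (c : ZMod N)
    (hπ : ∀ j, π (e j) = e (c - j))
    (h2h : (h : ZMod N) + (h : ZMod N) = 0)
    (hker : ∀ x : ZMod N, x + x = 0 → x = 0 ∨ x = (h : ZMod N))
    (j0 : ZMod N) (hj0 : j0 + (h : ZMod N) = c - j0) (hne : c - j0 ≠ j0) :
    (Finset.univ.filter (fun p : Fin N × Fin N =>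
      p.1 < p.2 ∧ π p.1 = p.2 ∧ σ p.1 = p.2)).card = 1 := by
  classical
  have hj1h : (c - j0) + (h : ZMod N) = j0 := by linear_combination h2h - hj0
  have hcj1 : c - (c - j0) = j0 := by ring
  have hab : e j0 ≠ e (c - j0) := fun q => hne (einj q).symm
  have hπa : π (e j0) = e (c - j0) := hπ j0
  have hσa : σ (e j0) = e (c - j0) := by rw [hσ, hj0]
  have hπb : π (e (c - j0)) = e j0 := by rw [hπ, hcj1]
  have hσb : σ (e (c - j0)) = e j0 := by rw [hσ, hj1h]
  have huniq : ∀ j : ZMod N, j + (h : ZMod N) = c - j → j = j0 ∨ j = c - j0 := by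
    intro j hj
    have hzero : (j - j0) + (j - j0) = 0 := by linear_combination hj - hj0
    rcases hker _ hzero with hk | hk
    · left; exact sub_eq_zero.mp hk
    · right; linear_combination hk + hj0
  have hclass : ∀ p1 p2 : Fin N, π p1 = p2 → σ p1 = p2 →
      (p1 = e j0 ∧ p2 = e (c - j0)) ∨ (p1 = e (c - j0) ∧ p2 = e j0) := by
    intro p1 p2 h2 h3
    obtain ⟨j, rfl⟩ := esurj p1
    rw [hπ] at h2
    rw [hσ] at h3
    rcases huniq j (einj (h3.trans h2.symm)) with rfl | rfl
    · left; exact ⟨rfl, h2.symm⟩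
    · right; exact ⟨rfl, by rw [← h2, hcj1]⟩
  have main : ∀ u v : Fin N, u < v → π u = v → σ u = v →
      (∀ p1 p2 : Fin N, π p1 = p2 → σ p1 = p2 → (p1 = u ∧ p2 = v) ∨ (p1 = v ∧ p2 = u)) →
      (Finset.univ.filter (fun p : Fin N × Fin N =>
        p.1 < p.2 ∧ π p.1 = p.2 ∧ σ p.1 = p.2)) = {(u, v)} := by
    intro u v huv hπu hσu hcl
    ext ⟨p1, p2⟩
    simp only [mem_filter, mem_univ, true_and, mem_singleton, Prod.mk.injEq]
    constructor
    · rintro ⟨hlt, h2, h3⟩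
      rcases hcl p1 p2 h2 h3 with ⟨rfl, rfl⟩ | ⟨rfl, rfl⟩
      · exact ⟨rfl, rfl⟩
      · exact absurd hlt (asymm huv)
    · rintro ⟨rfl, rfl⟩
      exact ⟨huv, hπu, hσu⟩
  rcases hab.lt_or_gt with hlt | hlt
  · rw [main (e j0) (e (c - j0)) hlt hπa hσa hclass]
    exact Finset.card_singleton _
  · rw [main (e (c - j0)) (e j0) hlt hπb hσb (fun p1 p2 g1 g2 => (hclass p1 p2 g1 g2).symm)]
    exact Finset.card_singleton _

lemma main_lemma {N : ℕ} (τ κ : Equiv.Perm (Fin N))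
    (hτ : τ * τ = 1) (hκ : κ * κ = 1)
    (hmin : NoCommonInvariant τ κ)
    (hlen : τ.support.card ≠ κ.support.card)
    (x0 : Fin N) (hx0 : κ x0 = x0) :
    ∃ σ : Equiv.Perm (Fin N), σ * σ = 1 ∧ Commute σ τ ∧ Commute σ κ ∧
      Ssign σ τ * Ssign σ κ = -1 := by
  classical
  by_cases hN1 : N ≤ 1
  · exfalso
    haveI : Subsingleton (Fin N) := by
      rcases Nat.lt_or_ge N 1 with hx | hx
      · have hz : N = 0 := by omega
        subst hz; infer_instance
      · have hz : N = 1 := by omega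
        subst hz; infer_instance
    have : τ = κ := Equiv.ext fun x => Subsingleton.elim _ _
    exact hlen (by rw [this])
  push_neg at hN1
  haveI : NeZero N := ⟨by omega⟩
  set ρ := τ * κ with hρdef
  have hτi : τ⁻¹ = τ := inv_eq_of_mul_eq_one_right hτ
  have hκi : κ⁻¹ = κ := inv_eq_of_mul_eq_one_right hκ
  have hρinv : ρ⁻¹ = κ * τ := by rw [hρdef, mul_inv_rev, hτi, hκi]
  have conjτ : τ * ρ * τ⁻¹ = ρ⁻¹ := by
    rw [hτi, hρinv, hρdef, ← mul_assoc, hτ, one_mul]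
  have conjκ : κ * ρ * κ⁻¹ = ρ⁻¹ := by
    rw [hκi, hρinv, hρdef, mul_assoc, mul_assoc, hκ, mul_one]
  have conjτz : ∀ k : ℤ, τ * ρ ^ k * τ = ρ ^ (-k) := by
    intro k
    calc τ * ρ ^ k * τ = τ * ρ ^ k * τ⁻¹ := by rw [hτi]
      _ = (τ * ρ * τ⁻¹) ^ k := conj_zpow.symm
      _ = (ρ⁻¹) ^ k := by rw [conjτ]
      _ = ρ ^ (-k) := by rw [inv_zpow, zpow_neg]
  have conjκz : ∀ k : ℤ, κ * ρ ^ k * κ = ρ ^ (-k) := by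
    intro k
    calc κ * ρ ^ k * κ = κ * ρ ^ k * κ⁻¹ := by rw [hκi]
      _ = (κ * ρ * κ⁻¹) ^ k := conj_zpow.symm
      _ = (ρ⁻¹) ^ k := by rw [conjκ]
      _ = ρ ^ (-k) := by rw [inv_zpow, zpow_neg]
  have hρx0 : ρ x0 = τ x0 := by
    rw [hρdef, Equiv.Perm.mul_apply, hx0]
  have hτρ : ∀ k : ℤ, τ * ρ ^ k = ρ ^ (-k) * τ := by
    intro k
    rw [← conjτz k, mul_assoc, hτ, mul_one]
  have hκρ : ∀ k : ℤ, κ * ρ ^ k = ρ ^ (-k) * κ := by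
    intro k
    rw [← conjκz k, mul_assoc, hκ, mul_one]
  have gτ : ∀ k : ℤ, τ ((ρ ^ k) x0) = (ρ ^ (1 - k)) x0 := by
    intro k
    calc τ ((ρ ^ k) x0) = (τ * ρ ^ k) x0 := rfl
      _ = (ρ ^ (-k) * τ) x0 := by rw [hτρ]
      _ = (ρ ^ (-k)) (τ x0) := rfl
      _ = (ρ ^ (-k)) (ρ x0) := by rw [← hρx0]
      _ = (ρ ^ (-k) * ρ ^ (1 : ℤ)) x0 := by rw [zpow_one]; rfl
      _ = (ρ ^ (1 - k)) x0 := by rw [← zpow_add]; ring_nf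
  have gκ : ∀ k : ℤ, κ ((ρ ^ k) x0) = (ρ ^ (-k)) x0 := by
    intro k
    calc κ ((ρ ^ k) x0) = (κ * ρ ^ k) x0 := rfl
      _ = (ρ ^ (-k) * κ) x0 := by rw [hκρ]
      _ = (ρ ^ (-k)) (κ x0) := rfl
      _ = (ρ ^ (-k)) x0 := by rw [hx0]
  -- transitivity
  have gsurj : ∀ y : Fin N, ∃ k : ℤ, (ρ ^ k) x0 = y := by
    by_contra hcon
    push_neg at hcon
    obtain ⟨y, hy⟩ := hcon
    set H : Finset (Fin N) := univ.filter (fun z => ∃ k : ℤ, (ρ ^ k) x0 = z) with hH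
    have hne : H.Nonempty := ⟨x0, by
      simp only [hH, mem_filter, mem_univ, true_and]
      exact ⟨0, by simp⟩⟩
    have hnuniv : H ≠ univ := by
      intro hu
      have : y ∈ H := hu ▸ mem_univ y
      simp only [hH, mem_filter, mem_univ, true_and] at this
      obtain ⟨k, hk⟩ := this
      exact hy k hk
    refine hmin H hne hnuniv ⟨?_, ?_⟩
    · intro a ha
      simp only [hH, mem_filter, mem_univ, true_and] at ha ⊢
      obtain ⟨k, hk⟩ := ha
      exact ⟨1 - k, by rw [← hk, gτ]⟩
    · intro a ha
      simp only [hH, mem_filter, mem_univ, true_and] at ha ⊢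
      obtain ⟨k, hk⟩ := ha
      exact ⟨-k, by rw [← hk, gκ]⟩
  -- rho is an N-cycle
  have hnofix : ∀ y, ρ y ≠ y := by
    intro y hy
    obtain ⟨k, hk⟩ := gsurj y
    have hx : ρ x0 = x0 := by
      apply (ρ ^ k).injective
      have hcomm : ρ * ρ ^ k = ρ ^ k * ρ := ((Commute.refl ρ).zpow_right k).eq
      calc (ρ ^ k) (ρ x0) = (ρ ^ k * ρ) x0 := rfl
        _ = (ρ * ρ ^ k) x0 := by rw [hcomm]
        _ = ρ ((ρ ^ k) x0) := rfl
        _ = ρ y := by rw [hk]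
        _ = y := hy
        _ = (ρ ^ k) x0 := hk.symm
    have hall : ∀ z : Fin N, z = x0 := by
      intro z
      obtain ⟨m, hm⟩ := gsurj z
      rw [← hm, Equiv.Perm.zpow_apply_eq_self_of_apply_eq_self hx]
    have h01 : (⟨0, by omega⟩ : Fin N) = ⟨1, by omega⟩ := by
      rw [hall ⟨0, by omega⟩, hall ⟨1, by omega⟩]
    simp at h01
  have hcyc : ρ.IsCycle := ⟨x0, hnofix x0, fun y _ => gsurj y⟩
  have hsupp : ρ.support = univ := by
    ext y
    simp [Equiv.Perm.mem_support, hnofix y]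
  have hord : orderOf ρ = N := by
    rw [hcyc.orderOf, hsupp, card_univ, Fintype.card_fin]
  have hρN : ρ ^ N = 1 := by
    have := pow_orderOf_eq_one ρ
    rwa [hord] at this
  have hρNz : ρ ^ (N : ℤ) = 1 := by rw [zpow_natCast, hρN]
  -- the labeling e
  set e : ZMod N → Fin N := fun j => (ρ ^ (j.val)) x0 with he
  have ezpow : ∀ j : ZMod N, e j = (ρ ^ ((j.val : ℤ))) x0 := by
    intro j; rw [zpow_natCast]
  have key : ∀ k : ℤ, (ρ ^ k) x0 = e ((k : ZMod N)) := by
    intro k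
    rw [ezpow]
    congr 1
    rw [ZMod.val_intCast]
    conv_lhs => rw [← Int.emod_add_mul_ediv k (N : ℤ)]
    rw [zpow_add, zpow_mul, hρNz, one_zpow, mul_one]
  have hvalcast : ∀ j : ZMod N, (((j.val : ℤ)) : ZMod N) = j := by
    intro j
    push_cast
    exact ZMod.natCast_zmod_val j
  have eτ : ∀ j : ZMod N, τ (e j) = e (1 - j) := by
    intro j
    rw [ezpow, gτ, key]
    congr 1
    push_cast
    rw [ZMod.natCast_zmod_val]
  have eκ : ∀ j : ZMod N, κ (e j) = e (0 - j) := by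
    intro j
    rw [ezpow, gκ, key]
    congr 1
    push_cast
    rw [ZMod.natCast_zmod_val]
    ring
  have esurj : Function.Surjective e := by
    intro y
    obtain ⟨k, hk⟩ := gsurj y
    exact ⟨(k : ZMod N), by rw [← key, hk]⟩
  have einj : Function.Injective e := by
    have hcard : Fintype.card (ZMod N) = Fintype.card (Fin N) := by
      rw [ZMod.card, Fintype.card_fin]
    exact ((Fintype.bijective_iff_surjective_and_card e).mpr ⟨esurj, hcard⟩).injective
  -- N is even
  have hNeven : Even N := by
    by_contra hodd
    have hodd' : Odd N := Nat.not_even_iff_odd.mp hodd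
    have hcop : Nat.Coprime 2 N := Nat.coprime_two_left.mpr hodd'
    set u := ZMod.unitOfCoprime 2 hcop with hu
    have hu2 : ((u : (ZMod N)ˣ) : ZMod N) = 2 := by
      rw [hu, ZMod.coe_unitOfCoprime]
      norm_cast
    have hfix : ∀ (π : Equiv.Perm (Fin N)) (c : ZMod N), (∀ j, π (e j) = e (c - j)) →
        univ.filter (fun y => π y = y) = {e (((u⁻¹ : (ZMod N)ˣ) : ZMod N) * c)} := by
      intro π c hπc
      ext y
      simp only [mem_filter, mem_univ, true_and, mem_singleton]
      obtain ⟨j, rfl⟩ := esurj y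
      rw [hπc]
      constructor
      · intro hj
        have hcj : c - j = j := einj hj
        have h2j : ((u : (ZMod N)ˣ) : ZMod N) * j = c := by
          rw [hu2]; linear_combination - hcj
        have hjval : j = ((u⁻¹ : (ZMod N)ˣ) : ZMod N) * c := by
          rw [← h2j, ← mul_assoc, ← Units.val_mul, inv_mul_cancel, Units.val_one, one_mul]
        rw [hjval]
      · intro hj
        have hjj : j = ((u⁻¹ : (ZMod N)ˣ) : ZMod N) * c := einj hj
        have hval1 : ((u : (ZMod N)ˣ) : ZMod N) * (((u⁻¹ : (ZMod N)ˣ) : ZMod N) * c) = c := by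
          rw [← mul_assoc, ← Units.val_mul, mul_inv_cancel, Units.val_one, one_mul]
        have h2 : (2 : ZMod N) * (((u⁻¹ : (ZMod N)ˣ) : ZMod N) * c) = c := by
          rw [← hu2]; exact hval1
        rw [hjj]
        congr 1
        linear_combination - h2
    have hsup : ∀ (π : Equiv.Perm (Fin N)) (c : ZMod N), (∀ j, π (e j) = e (c - j)) →
        π.support.card = N - 1 := by
      intro π c hπc
      have h1 : π.support = (univ.filter (fun y => π y = y))ᶜ := by
        ext y
        simp [Equiv.Perm.mem_support]
      rw [h1, hfix π c hπc, Finset.card_compl, Finset.card_singleton, Fintype.card_fin]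
    have eτ' : ∀ j : ZMod N, τ (e j) = e ((1 : ZMod N) - j) := eτ
    exact hlen (by rw [hsup τ 1 eτ', hsup κ 0 eκ])
  obtain ⟨hhalf, hhh⟩ := hNeven
  have hN2 : N = 2 * hhalf := by omega
  have hpos : 1 ≤ hhalf := by omega
  have h2h : (hhalf : ZMod N) + (hhalf : ZMod N) = 0 := by
    have h0 : ((hhalf + hhalf : ℕ) : ZMod N) = 0 := by
      rw [← hhh]; exact ZMod.natCast_self N
    push_cast at h0
    exact h0
  have hne0 : (hhalf : ZMod N) ≠ 0 := by
    intro h0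
    rw [ZMod.natCast_eq_zero_iff] at h0
    have := Nat.le_of_dvd hpos h0
    omega
  have hker : ∀ x : ZMod N, x + x = 0 → x = 0 ∨ x = (hhalf : ZMod N) := by
    intro x hx
    have hv : ((x.val + x.val : ℕ) : ZMod N) = 0 := by
      push_cast
      rw [ZMod.natCast_zmod_val]
      exact hx
    rw [ZMod.natCast_eq_zero_iff] at hv
    obtain ⟨m, hm⟩ := hv
    have hlt : x.val < N := ZMod.val_lt x
    have hm2 : N * m < N * 2 := by rw [← hm]; omega
    have hmlt : m < 2 := lt_of_mul_lt_mul_left hm2 (Nat.zero_le N)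
    have hcases : m = 0 ∨ m = 1 := by omega
    rcases hcases with rfl | rfl
    · left
      have hv0 : x.val = 0 := by omega
      rw [← ZMod.natCast_zmod_val x, hv0, Nat.cast_zero]
    · right
      have hv1 : x.val = hhalf := by omega
      rw [← ZMod.natCast_zmod_val x, hv1]
  -- the commuting involution
  set σ : Equiv.Perm (Fin N) := ρ ^ hhalf with hσdef
  have hσσ : σ * σ = 1 := by
    rw [hσdef, ← pow_add, ← hhh, hρN]
  have hσinv : σ⁻¹ = σ := inv_eq_of_mul_eq_one_right hσσ
  have conjτσ : τ * σ * τ⁻¹ = σ⁻¹ := by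
    rw [hσdef]
    calc τ * ρ ^ hhalf * τ⁻¹ = (τ * ρ * τ⁻¹) ^ hhalf := conj_pow.symm
      _ = (ρ⁻¹) ^ hhalf := by rw [conjτ]
      _ = (ρ ^ hhalf)⁻¹ := by rw [inv_pow]
  have conjκσ : κ * σ * κ⁻¹ = σ⁻¹ := by
    rw [hσdef]
    calc κ * ρ ^ hhalf * κ⁻¹ = (κ * ρ * κ⁻¹) ^ hhalf := conj_pow.symm
      _ = (ρ⁻¹) ^ hhalf := by rw [conjκ]
      _ = (ρ ^ hhalf)⁻¹ := by rw [inv_pow]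
  have hcτ : Commute σ τ := by
    have h3 : τ * σ * τ = σ := by
      have h5 := conjτσ
      rwa [hτi, hσinv] at h5
    have h4 : σ * τ = τ * σ :=
      calc σ * τ = (τ * σ * τ) * τ := by rw [h3]
        _ = τ * σ * (τ * τ) := by rw [mul_assoc]
        _ = τ * σ := by rw [hτ, mul_one]
    exact h4
  have hcκ : Commute σ κ := by
    have h3 : κ * σ * κ = σ := by
      have h5 := conjκσ
      rwa [hκi, hσinv] at h5
    have h4 : σ * κ = κ * σ :=
      calc σ * κ = (κ * σ * κ) * κ := by rw [h3]
        _ = κ * σ * (κ * κ) := by rw [mul_assoc]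
        _ = κ * σ := by rw [hκ, mul_one]
    exact h4
  have keyn : ∀ k : ℕ, (ρ ^ k) x0 = e ((k : ZMod N)) := by
    intro k
    have h1 := key (k : ℤ)
    rw [zpow_natCast] at h1
    rw [h1]
    congr 1
    push_cast
    rfl
  have eσ : ∀ j : ZMod N, σ (e j) = e (j + (hhalf : ZMod N)) := by
    intro j
    have h1 : σ (e j) = (ρ ^ (hhalf + j.val)) x0 := by
      rw [hσdef]
      show (ρ ^ hhalf) ((ρ ^ j.val) x0) = _
      rw [← Equiv.Perm.mul_apply, ← pow_add]
    rw [h1, keyn]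
    congr 1
    push_cast
    rw [ZMod.natCast_zmod_val]
    ring
  refine ⟨σ, hσσ, hcτ, hcκ, ?_⟩
  rw [Ssign_eq_fix σ τ hσσ hτ hcτ, Ssign_eq_fix σ κ hσσ hκ hcκ]
  have eτ' : ∀ j : ZMod N, τ (e j) = e ((1 : ZMod N) - j) := eτ
  have hdvd : (2 : ℕ) ∣ N := ⟨hhalf, hN2⟩
  rcases Nat.even_or_odd hhalf with hpar | hpar
  · -- hhalf even
    obtain ⟨m, hm⟩ := hpar
    have hτno : ∀ j : ZMod N, j + (hhalf : ZMod N) ≠ 1 - j := by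
      intro j hj
      have hv : ((j.val + hhalf + j.val : ℕ) : ZMod N) = ((1 : ℕ) : ZMod N) := by
        push_cast
        rw [ZMod.natCast_zmod_val]
        linear_combination hj
      rw [ZMod.natCast_eq_natCast_iff] at hv
      have hv2 := hv.of_dvd hdvd
      unfold Nat.ModEq at hv2
      omega
    have hj0κ : ((m : ℕ) : ZMod N) + (hhalf : ZMod N) = 0 - ((m : ℕ) : ZMod N) := by
      have hq : ((m + hhalf + m : ℕ) : ZMod N) = ((N : ℕ) : ZMod N) := by congr 1; omega
      push_cast [ZMod.natCast_self] at hq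
      linear_combination hq
    have hκne : (0 : ZMod N) - ((m : ℕ) : ZMod N) ≠ ((m : ℕ) : ZMod N) := by
      intro hq
      apply hne0
      exact add_eq_left.mp (hj0κ.trans hq)
    rw [fix_eq_empty σ τ e esurj einj hhalf eσ 1 eτ' hτno]
    rw [fix_eq_singleton σ κ e esurj einj hhalf eσ 0 eκ h2h hker ((m : ℕ) : ZMod N) hj0κ hκne]
    norm_num
  · -- hhalf odd
    obtain ⟨m, hm⟩ := hpar
    have hj0τ : ((m : ZMod N) + 1) + (hhalf : ZMod N) = 1 - ((m : ZMod N) + 1) := by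
      have hq : (((m + 1) + hhalf + (m + 1) : ℕ) : ZMod N) = ((N + 1 : ℕ) : ZMod N) := by
        congr 1; omega
      push_cast [ZMod.natCast_self] at hq
      linear_combination hq
    have hτne : (1 : ZMod N) - ((m : ZMod N) + 1) ≠ ((m : ZMod N) + 1) := by
      intro hq
      apply hne0
      exact add_eq_left.mp (hj0τ.trans hq)
    have hκno : ∀ j : ZMod N, j + (hhalf : ZMod N) ≠ 0 - j := by
      intro j hj
      have hv : ((j.val + hhalf + j.val : ℕ) : ZMod N) = ((0 : ℕ) : ZMod N) := by
        push_cast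
        rw [ZMod.natCast_zmod_val]
        linear_combination hj
      rw [ZMod.natCast_eq_natCast_iff] at hv
      have hv2 := hv.of_dvd hdvd
      unfold Nat.ModEq at hv2
      omega
    rw [fix_eq_singleton σ τ e esurj einj hhalf eσ 1 eτ' h2h hker ((m : ZMod N) + 1) hj0τ hτne]
    rw [fix_eq_empty σ κ e esurj einj hhalf eσ 0 eκ hκno]
    norm_num

/-- If τ, κ are involutions of different lengths with no common proper nonempty
invariant subset, then some involution σ commuting with both satisfies
S(σ,τ)·S(σ,κ) = −1. -/
theorem Ssign_prod_eq_neg_one {N : ℕ} (τ κ : Equiv.Perm (Fin N))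
    (hτ : τ * τ = 1) (hκ : κ * κ = 1)
    (hmin : NoCommonInvariant τ κ)
    (hlen : τ.support.card ≠ κ.support.card) :
    ∃ σ : Equiv.Perm (Fin N), σ * σ = 1 ∧ Commute σ τ ∧ Commute σ κ ∧
      Ssign σ τ * Ssign σ κ = -1 := by
  by_cases hκfix : ∃ x0, κ x0 = x0
  · obtain ⟨x0, hx0⟩ := hκfix
    exact main_lemma τ κ hτ hκ hmin hlen x0 hx0
  · have hτfix : ∃ x0, τ x0 = x0 := by
      by_contra hτno
      push_neg at hτno hκfix
      have h1 : τ.support = univ := by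
        ext y; simp [Equiv.Perm.mem_support, hτno y]
      have h2 : κ.support = univ := by
        ext y; simp [Equiv.Perm.mem_support, hκfix y]
      exact hlen (by rw [h1, h2])
    obtain ⟨x0, hx0⟩ := hτfix
    have hmin' : NoCommonInvariant κ τ := fun H h1 h2 h3 => hmin H h1 h2 ⟨h3.2, h3.1⟩
    obtain ⟨σ, hσσ, hc1, hc2, hS⟩ := main_lemma κ τ hκ hτ hmin' (Ne.symm hlen) x0 hx0
    refine ⟨σ, hσσ, hc2, hc1, ?_⟩
    rw [mul_comm]
    exact hS
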